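/- Let R be a ranking function space. If there exist x, x' ∈ X and r, r' ∈ R such that r(x) > r(x') and r'(x') > r'(x), then OOD detection is not learnable under AUC in the total space 𝒟^all (the domain space consisting of all domains) for R; that is, the learnability of OOD detection under AUC is not distribution-free for R. -/

import Mathlib

open MeasureTheory Filter Set
open scoped ENNReal NNReal

noncomputable section

namespace OODF

/-- A *domain*: a mixture `(1-π)·D_I + π·D_O` of an ID joint distribution `D_I` on
`𝒳 × {1,…,K}` and an OOD joint distribution `D_O` on `𝒳 × {K+1}`, with class prior
`π ∈ [0,1)`.  Labels are encoded as naturals: ID labels are `{1,…,K}`, OOD label is `K+1`. -/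
structure Domain (𝒳 : Type*) [MeasurableSpace 𝒳] (K : ℕ) where
  DI : Measure (𝒳 × ℕ)
  DO : Measure (𝒳 × ℕ)
  prior : ℝ
  probI : IsProbabilityMeasure DI
  probO : IsProbabilityMeasure DO
  suppI : DI {p | p.2 ∉ Set.Icc 1 K} = 0
  suppO : DO {p | p.2 ≠ K + 1} = 0
  prior_mem : prior ∈ Set.Ico (0 : ℝ) 1

variable {𝒳 : Type*} [MeasurableSpace 𝒳] {K : ℕ}

namespace Domain

/-- the mixed joint distribution `D_XY = (1-π)·D_I + π·D_O` -/
def joint (D : Domain 𝒳 K) : Measure (𝒳 × ℕ) :=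
  ENNReal.ofReal (1 - D.prior) • D.DI + ENNReal.ofReal D.prior • D.DO

/-- the marginal `D_{X_I}` of the ID joint distribution on the feature space -/
def margI (D : Domain 𝒳 K) : Measure 𝒳 := D.DI.map Prod.fst

/-- the marginal `D_{X_O}` of the OOD joint distribution on the feature space -/
def margO (D : Domain 𝒳 K) : Measure 𝒳 := D.DO.map Prod.fst

/-- the domain `D^α = (1-α)·D_I + α·D_O`, i.e. `D` with its class prior replaced by `α` -/
def withPrior (D : Domain 𝒳 K) (α : Set.Ico (0 : ℝ) 1) : Domain 𝒳 K :=
  { D with prior := α.1, prior_mem := α.2 }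

end Domain

/-- a prior-unknown domain space: closed under changing the class prior -/
def PriorUnknown (𝒟 : Set (Domain 𝒳 K)) : Prop :=
  ∀ D ∈ 𝒟, ∀ α : Set.Ico (0 : ℝ) 1, D.withPrior α ∈ 𝒟

/-- the risk `R_D(h)` w.r.t. the mixed joint distribution -/
def risk (ℓ : ℕ → ℕ → ℝ) (D : Domain 𝒳 K) (h : 𝒳 → ℕ) : ℝ :=
  ∫ p, ℓ (h p.1) p.2 ∂D.joint

/-- the ID risk `R_D^in(h)` -/
def riskIn (ℓ : ℕ → ℕ → ℝ) (D : Domain 𝒳 K) (h : 𝒳 → ℕ) : ℝ :=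
  ∫ p, ℓ (h p.1) p.2 ∂D.DI

/-- the OOD risk `R_D^out(h)` -/
def riskOut (ℓ : ℕ → ℕ → ℝ) (D : Domain 𝒳 K) (h : 𝒳 → ℕ) : ℝ :=
  ∫ p, ℓ (h p.1) (K + 1) ∂D.DO

/-- the `α`-risk `R_D^α(h) = (1-α)·R_D^in(h) + α·R_D^out(h)` -/
def riskA (ℓ : ℕ → ℕ → ℝ) (D : Domain 𝒳 K) (h : 𝒳 → ℕ) (α : ℝ) : ℝ :=
  (1 - α) * riskIn ℓ D h + α * riskOut ℓ D h

/-- the distribution of an i.i.d. sample of size `n` from the ID joint distribution -/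
def sampleMeasure (D : Domain 𝒳 K) (n : ℕ) : Measure (Fin n → 𝒳 × ℕ) :=
  letI := D.probI
  Measure.pi fun _ => D.DI

/-- An algorithm maps, for every sample size `n ≥ 1`, a labeled sample to a function on `𝒳`. -/
abbrev Algorithm (𝒳 β : Type*) := (n : ℕ) → (Fin n → 𝒳 × ℕ) → (𝒳 → β)

/-- `A` is consistent w.r.t. `𝒟` under risk with rate `ε`: it outputs hypotheses in `H`,
the resulting risks are measurable in the sample, and the expected excess risk for samples
of size `n ≥ 1` is at most `ε n`. -/
def ConsistentRisk (ℓ : ℕ → ℕ → ℝ) (𝒟 : Set (Domain 𝒳 K)) (H : Set (𝒳 → ℕ))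
    (A : Algorithm 𝒳 ℕ) (ε : ℕ → ℝ) : Prop :=
  (∀ n : ℕ, 1 ≤ n → ∀ S, A n S ∈ H) ∧
  (∀ D ∈ 𝒟, ∀ n : ℕ, 1 ≤ n → Measurable fun S : Fin n → 𝒳 × ℕ => risk ℓ D (A n S)) ∧
  ∀ D ∈ 𝒟, ∀ n : ℕ, 1 ≤ n →
    ∫ S, (risk ℓ D (A n S) - ⨅ h : H, risk ℓ D h.1) ∂(sampleMeasure D n) ≤ ε n

/-- OOD detection is learnable under risk in `𝒟` for `H` with the given rate. -/
def LearnableRiskRate (ℓ : ℕ → ℕ → ℝ) (𝒟 : Set (Domain 𝒳 K)) (H : Set (𝒳 → ℕ))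
    (ε : ℕ → ℝ) : Prop :=
  ∃ A, ConsistentRisk ℓ 𝒟 H A ε

/-- learnability of OOD detection under risk -/
def LearnableRisk (ℓ : ℕ → ℕ → ℝ) (𝒟 : Set (Domain 𝒳 K)) (H : Set (𝒳 → ℕ)) : Prop :=
  ∃ ε : ℕ → ℝ, Antitone ε ∧ Tendsto ε atTop (nhds 0) ∧ LearnableRiskRate ℓ 𝒟 H ε

/-- `A` is strongly consistent: the expected excess `α`-risks are uniformly small over
all `α ∈ [0,1]`. -/
def StrongConsistentRisk (ℓ : ℕ → ℕ → ℝ) (𝒟 : Set (Domain 𝒳 K)) (H : Set (𝒳 → ℕ))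
    (A : Algorithm 𝒳 ℕ) (ε : ℕ → ℝ) : Prop :=
  (∀ n : ℕ, 1 ≤ n → ∀ S, A n S ∈ H) ∧
  (∀ D ∈ 𝒟, ∀ n : ℕ, 1 ≤ n → ∀ α : ℝ,
    Measurable fun S : Fin n → 𝒳 × ℕ => riskA ℓ D (A n S) α) ∧
  ∀ D ∈ 𝒟, ∀ n : ℕ, 1 ≤ n → ∀ α ∈ Set.Icc (0 : ℝ) 1,
    ∫ S, (riskA ℓ D (A n S) α - ⨅ h : H, riskA ℓ D h.1 α) ∂(sampleMeasure D n) ≤ ε n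

/-- strong learnability of OOD detection under risk -/
def StrongLearnableRisk (ℓ : ℕ → ℕ → ℝ) (𝒟 : Set (Domain 𝒳 K)) (H : Set (𝒳 → ℕ)) : Prop :=
  ∃ ε : ℕ → ℝ, Antitone ε ∧ Tendsto ε atTop (nhds 0) ∧
    ∃ A, StrongConsistentRisk ℓ 𝒟 H A ε

/-- the AUC of a ranking function `r` w.r.t. ID marginal `P` and OOD marginal `Q`:
`AUC(r) = E_{x ~ P} E_{x' ~ Q} [1_{r(x) > r(x')} + (1/2)·1_{r(x) = r(x')}]` -/
def AUC (r : 𝒳 → ℝ) (P Q : Measure 𝒳) : ℝ :=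
  ∫ x, (∫ x', ((if r x' < r x then (1 : ℝ) else 0) +
      (1 / 2) * (if r x = r x' then (1 : ℝ) else 0)) ∂Q) ∂P

/-- `A` is AUC-consistent w.r.t. `𝒟` with rate `ε`. -/
def ConsistentAUC (𝒟 : Set (Domain 𝒳 K)) (R : Set (𝒳 → ℝ))
    (A : Algorithm 𝒳 ℝ) (ε : ℕ → ℝ) : Prop :=
  (∀ n : ℕ, 1 ≤ n → ∀ S, A n S ∈ R) ∧
  (∀ D ∈ 𝒟, ∀ n : ℕ, 1 ≤ n →
    Measurable fun S : Fin n → 𝒳 × ℕ => AUC (A n S) D.margI D.margO) ∧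
  ∀ D ∈ 𝒟, ∀ n : ℕ, 1 ≤ n →
    ∫ S, ((⨆ r : R, AUC r.1 D.margI D.margO) - AUC (A n S) D.margI D.margO)
      ∂(sampleMeasure D n) ≤ ε n

/-- OOD detection is learnable under AUC in `𝒟` for `R` with the given rate. -/
def LearnableAUCRate (𝒟 : Set (Domain 𝒳 K)) (R : Set (𝒳 → ℝ)) (ε : ℕ → ℝ) : Prop :=
  ∃ A, ConsistentAUC 𝒟 R A ε

/-- learnability of OOD detection under AUC -/
def LearnableAUC (𝒟 : Set (Domain 𝒳 K)) (R : Set (𝒳 → ℝ)) : Prop :=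
  ∃ ε : ℕ → ℝ, Antitone ε ∧ Tendsto ε atTop (nhds 0) ∧ LearnableAUCRate 𝒟 R ε

/-- the (topological) support of a measure -/
def mSupport {α : Type*} [TopologicalSpace α] [MeasurableSpace α] (μ : Measure α) : Set α :=
  {x | ∀ U ∈ nhds x, 0 < μ U}

/-- the separate space `𝒟^s`: all domains whose ID and OOD marginals have disjoint supports -/
def separateSpace (𝒳 : Type*) [MeasurableSpace 𝒳] [TopologicalSpace 𝒳] (K : ℕ) :
    Set (Domain 𝒳 K) :=
  {D | mSupport D.margO ∩ mSupport D.margI = ∅}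

/-- a class `G` of binary functions (encoded as predicates) shatters the finite set `C` -/
def Shatters {α : Type*} (G : Set (α → Prop)) (C : Finset α) : Prop :=
  ∀ f : α → Prop, ∃ g ∈ G, ∀ x ∈ C, g x ↔ f x

/-- the VC dimension of a class of binary functions (encoded as predicates) -/
def VCdim {α : Type*} (G : Set (α → Prop)) : ℕ∞ :=
  sSup {n : ℕ∞ | ∃ C : Finset α, Shatters G C ∧ n = (C.card : ℕ∞)}

section AuxNL

variable {𝒳' : Type*} [MeasurableSpace 𝒳'] [MeasurableSingletonClass 𝒳']

lemma my_integrable_dirac (f : 𝒳' → ℝ) (a : 𝒳') : Integrable f (Measure.dirac a) :=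
  (integrable_const (f a)).congr (MeasureTheory.ae_eq_dirac f).symm

lemma integral_half_dirac_add (f : 𝒳' → ℝ) (a b : 𝒳') :
    ∫ z, f z ∂((1/2 : ℝ≥0∞) • Measure.dirac a + (1/2 : ℝ≥0∞) • Measure.dirac b)
      = (1/2) * f a + (1/2) * f b := by
  rw [integral_add_measure ((my_integrable_dirac f a).smul_measure (by norm_num))
      ((my_integrable_dirac f b).smul_measure (by norm_num)),
    integral_smul_measure, integral_smul_measure, integral_dirac, integral_dirac]
  norm_num [ENNReal.toReal_div]

lemma AUC_two_dirac (g : 𝒳' → ℝ) (a b c : 𝒳') :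
    AUC g ((1/2 : ℝ≥0∞) • Measure.dirac a + (1/2 : ℝ≥0∞) • Measure.dirac b)
        (Measure.dirac c)
      = (1/2) * ((if g c < g a then (1:ℝ) else 0) + (1/2) * (if g a = g c then (1:ℝ) else 0))
      + (1/2) * ((if g c < g b then (1:ℝ) else 0) + (1/2) * (if g b = g c then (1:ℝ) else 0)) := by
  unfold AUC
  rw [integral_half_dirac_add, integral_dirac, integral_dirac]

end AuxNL

/-- Theorem 6 / `T4_auc` of the paper: impossibility for the total space
under AUC.  If there are `x, x' ∈ X` and `r, r' ∈ R` with `r(x) > r(x')` and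
`r'(x') > r'(x)`, then OOD detection is not learnable under AUC in the total space (the
space of all domains) for `R`. -/

theorem stmt8 {d K : ℕ} (hK : 1 ≤ K) (X : Set (EuclideanSpace ℝ (Fin d)))
    (R : Set (↥X → ℝ)) (hR : ∀ r ∈ R, Measurable r)
    (hnontriv : ∃ x x' : ↥X, ∃ r ∈ R, ∃ r' ∈ R, r x' < r x ∧ r' x < r' x') :
    ¬ LearnableAUC (Set.univ : Set (Domain ↥X K)) R := by
  obtain ⟨x, x', r, hr, r', hr', hrlt, hr'lt⟩ := hnontriv
  rintro ⟨ε, hmono, htend, A, hmemR, hmeasA, hexc⟩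
  haveI : Nonempty R := ⟨⟨r, hr⟩⟩
  -- the shared ID joint distribution
  set μI : Measure (↥X × ℕ) :=
    (1/2 : ℝ≥0∞) • Measure.dirac (x, 1) + (1/2 : ℝ≥0∞) • Measure.dirac (x', 1) with hμI
  have hprobI : IsProbabilityMeasure μI := by
    constructor
    simp [hμI]
    rw [ENNReal.inv_two_add_inv_two]
  have hmI : MeasurableSet {p : ↥X × ℕ | p.2 ∉ Set.Icc 1 K} :=
    measurable_snd measurableSet_Icc.compl
  have hsuppI : μI {p : ↥X × ℕ | p.2 ∉ Set.Icc 1 K} = 0 := by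
    rw [hμI]
    simp [Measure.dirac_apply' _ hmI, Set.indicator, hK]
    omega
  have hmO : MeasurableSet {p : ↥X × ℕ | p.2 ≠ K + 1} :=
    measurable_snd (measurableSet_singleton (K+1)).compl
  have hsuppO : ∀ z : ↥X, Measure.dirac (z, K+1) {p : ↥X × ℕ | p.2 ≠ K + 1} = 0 := fun z => by
    simp [Measure.dirac_apply' _ hmO]
  have hpm : (0 : ℝ) ∈ Set.Ico (0:ℝ) 1 := by constructor <;> norm_num
  set D1 : Domain ↥X K :=
    ⟨μI, Measure.dirac (x', K+1), 0, hprobI, inferInstance, hsuppI, hsuppO x', hpm⟩ with hD1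
  set D2 : Domain ↥X K :=
    ⟨μI, Measure.dirac (x, K+1), 0, hprobI, inferInstance, hsuppI, hsuppO x, hpm⟩ with hD2
  set M : Measure ↥X := (1/2 : ℝ≥0∞) • Measure.dirac x + (1/2 : ℝ≥0∞) • Measure.dirac x' with hM
  have hmargI : ∀ D : Domain ↥X K, D.DI = μI → D.margI = M := by
    intro D hD
    rw [Domain.margI, hD, hμI, Measure.map_add _ _ measurable_fst, Measure.map_smul,
      Measure.map_smul, Measure.map_dirac' measurable_fst, Measure.map_dirac' measurable_fst, hM]
  have hmargI1 : D1.margI = M := hmargI D1 rfl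
  have hmargI2 : D2.margI = M := hmargI D2 rfl
  have hmargO1 : D1.margO = Measure.dirac x' := by
    rw [Domain.margO]
    show (Measure.dirac (x', K+1)).map Prod.fst = _
    rw [Measure.map_dirac' measurable_fst]
  have hmargO2 : D2.margO = Measure.dirac x := by
    rw [Domain.margO]
    show (Measure.dirac (x, K+1)).map Prod.fst = _
    rw [Measure.map_dirac' measurable_fst]
  -- pointwise AUC facts
  have e1 : ∀ g : ↥X → ℝ, AUC g M (Measure.dirac x')
      = 1/4 + (1/2) * (if g x' < g x then (1:ℝ) else 0)
        + (1/4) * (if g x = g x' then (1:ℝ) else 0) := by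
    intro g
    rw [hM, AUC_two_dirac, if_neg (lt_irrefl _), if_pos rfl]
    ring
  have e2 : ∀ g : ↥X → ℝ, AUC g M (Measure.dirac x)
      = 1/4 + (1/2) * (if g x < g x' then (1:ℝ) else 0)
        + (1/4) * (if g x' = g x then (1:ℝ) else 0) := by
    intro g
    rw [hM, AUC_two_dirac, if_neg (lt_irrefl _), if_pos rfl]
    ring
  have h1le : ∀ g : ↥X → ℝ, AUC g M (Measure.dirac x') ≤ 3/4 := by
    intro g; rw [e1]; split_ifs <;> linarith
  have h2le : ∀ g : ↥X → ℝ, AUC g M (Measure.dirac x) ≤ 3/4 := by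
    intro g; rw [e2]; split_ifs <;> linarith
  have h1ge0 : ∀ g : ↥X → ℝ, 0 ≤ AUC g M (Measure.dirac x') := by
    intro g; rw [e1]; split_ifs <;> linarith
  have h2ge0 : ∀ g : ↥X → ℝ, 0 ≤ AUC g M (Measure.dirac x) := by
    intro g; rw [e2]; split_ifs <;> linarith
  have hsumle : ∀ g : ↥X → ℝ,
      AUC g M (Measure.dirac x') + AUC g M (Measure.dirac x) ≤ 1 := by
    intro g; rw [e1, e2]; split_ifs <;> linarith
  have hval1 : AUC r M (Measure.dirac x') = 3/4 := by
    rw [e1, if_pos hrlt, if_neg hrlt.ne']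
    norm_num
  have hval2 : AUC r' M (Measure.dirac x) = 3/4 := by
    rw [e2, if_pos hr'lt, if_neg hr'lt.ne']
    norm_num
  -- the suprema
  have hbdd1 : BddAbove (Set.range fun ρ : R => AUC ρ.1 M (Measure.dirac x')) := by
    refine ⟨3/4, ?_⟩; rintro v ⟨ρ, rfl⟩; exact h1le ρ.1
  have hbdd2 : BddAbove (Set.range fun ρ : R => AUC ρ.1 M (Measure.dirac x)) := by
    refine ⟨3/4, ?_⟩; rintro v ⟨ρ, rfl⟩; exact h2le ρ.1
  have hsup1 : (⨆ ρ : R, AUC ρ.1 M (Measure.dirac x')) = 3/4 := by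
    refine le_antisymm (ciSup_le fun ρ => h1le ρ.1) ?_
    have := le_ciSup hbdd1 (⟨r, hr⟩ : R)
    rwa [hval1] at this
  have hsup2 : (⨆ ρ : R, AUC ρ.1 M (Measure.dirac x)) = 3/4 := by
    refine le_antisymm (ciSup_le fun ρ => h2le ρ.1) ?_
    have := le_ciSup hbdd2 (⟨r', hr'⟩ : R)
    rwa [hval2] at this
  -- main estimate
  have key : ∀ n, 1 ≤ n → (1/4 : ℝ) ≤ ε n := by
    intro n hn
    haveI := hprobI
    have hsmeq : sampleMeasure D1 n = Measure.pi fun _ : Fin n => μI := rfl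
    have hsmeq2 : sampleMeasure D2 n = Measure.pi fun _ : Fin n => μI := rfl
    haveI hpn : IsProbabilityMeasure (Measure.pi fun _ : Fin n => μI) := inferInstance
    have h1 := hexc D1 (Set.mem_univ _) n hn
    have h2 := hexc D2 (Set.mem_univ _) n hn
    rw [hmargI1, hmargO1, hsup1, hsmeq] at h1
    rw [hmargI2, hmargO2, hsup2, hsmeq2] at h2
    have hm1 := hmeasA D1 (Set.mem_univ _) n hn
    have hm2 := hmeasA D2 (Set.mem_univ _) n hn
    rw [hmargI1, hmargO1] at hm1
    rw [hmargI2, hmargO2] at hm2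
    have hi1 : Integrable (fun S => AUC (A n S) M (Measure.dirac x')) (Measure.pi fun _ : Fin n => μI) :=
      ⟨hm1.aestronglyMeasurable, HasFiniteIntegral.of_bounded (C := 3/4)
        (Eventually.of_forall fun S => by
          rw [Real.norm_eq_abs, abs_le]
          exact ⟨by linarith [h1ge0 (A n S)], h1le (A n S)⟩)⟩
    have hi2 : Integrable (fun S => AUC (A n S) M (Measure.dirac x)) (Measure.pi fun _ : Fin n => μI) :=
      ⟨hm2.aestronglyMeasurable, HasFiniteIntegral.of_bounded (C := 3/4)
        (Eventually.of_forall fun S => by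
          rw [Real.norm_eq_abs, abs_le]
          exact ⟨by linarith [h2ge0 (A n S)], h2le (A n S)⟩)⟩
    rw [integral_sub (integrable_const _) hi1] at h1
    rw [integral_sub (integrable_const _) hi2] at h2
    simp only [integral_const, measure_univ, ENNReal.toReal_one, probReal_univ, one_smul] at h1 h2
    have hsum : ∫ S, AUC (A n S) M (Measure.dirac x') ∂(Measure.pi fun _ : Fin n => μI)
        + ∫ S, AUC (A n S) M (Measure.dirac x) ∂(Measure.pi fun _ : Fin n => μI) ≤ 1 := by
      rw [← integral_add hi1 hi2]
      calc ∫ S, (AUC (A n S) M (Measure.dirac x') + AUC (A n S) M (Measure.dirac x))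
            ∂(Measure.pi fun _ : Fin n => μI)
          ≤ ∫ _S, (1:ℝ) ∂(Measure.pi fun _ : Fin n => μI) :=
            integral_mono (hi1.add hi2) (integrable_const 1) fun S => hsumle (A n S)
        _ = 1 := by simp
    linarith
  have hev := (htend.eventually (gt_mem_nhds (show (0:ℝ) < 1/4 by norm_num))).and
    (eventually_ge_atTop 1)
  obtain ⟨n, hlt, hn⟩ := hev.exists
  linarith [key n hn]

end OODF

end
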